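/- Let V_1,…,V_{n−f} be independent integrable random vectors in ℝ^d with E[V_i] = g_i, E[‖V_i − g_i‖₂²] ≤ σ² for every i, and suppose (1/(n−f)) Σ_{j=1}^{n−f} ‖g_j − μ‖₂² ≤ Δ² for some μ ∈ ℝ^d. Then for every i ∈ [n−f], E[‖V_i − (1/(n−f)) Σ_{j=1}^{n−f} V_j‖₂²] ≤ 2σ² + 2(n − f + 1)Δ². -/

import Mathlib

open MeasureTheory ProbabilityTheory Finset

set_option maxHeartbeats 1000000

section helpers
variable {α : Type*} [MeasurableSpace α] {μ : Measure α}

lemma innerInt {E : Type*} [NormedAddCommGroup E] [InnerProductSpace ℝ E]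
    {f g : α → E} (hf : MemLp f 2 μ) (hg : MemLp g 2 μ) :
    Integrable (fun x => (inner ℝ (f x) (g x) : ℝ)) μ := by
  have h := MeasureTheory.L2.integrable_inner (𝕜 := ℝ) (hf.toLp f) (hg.toLp g)
  exact h.congr (by filter_upwards [hf.coeFn_toLp, hg.coeFn_toLp] with x h1 h2; rw [h1, h2])

lemma normSqInt {E : Type*} [NormedAddCommGroup E] [InnerProductSpace ℝ E]
    {f : α → E} (hf : MemLp f 2 μ) : Integrable (fun x => ‖f x‖ ^ 2) μ :=
  (innerInt hf hf).congr (Filter.Eventually.of_forall fun _ => real_inner_self_eq_norm_sq _)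

lemma normdecomp {E : Type*} [NormedAddCommGroup E] [InnerProductSpace ℝ E]
    (a s c : E) (κ : ℝ) :
    ‖(a - κ • s) + c‖ ^ 2 = ‖a‖ ^ 2 - 2 * κ * (inner ℝ a s : ℝ) + κ ^ 2 * ‖s‖ ^ 2
      + (2 * (inner ℝ a c : ℝ) - 2 * κ * (inner ℝ s c : ℝ)) + ‖c‖ ^ 2 := by
  rw [norm_add_sq_real, norm_sub_sq_real, real_inner_smul_right, inner_sub_left,
    real_inner_smul_left, norm_smul, Real.norm_eq_abs, mul_pow, sq_abs]
  ring

/-- Variance-style integral identity for centered, pairwise-uncorrelated random vectors. -/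
lemma key_integral {N : ℕ} {Ωs : Type*} [MeasurableSpace Ωs] {μ : Measure Ωs}
    [IsProbabilityMeasure μ] {E : Type*} [NormedAddCommGroup E] [InnerProductSpace ℝ E]
    [CompleteSpace E] (κ : ℝ)
    (W : Fin N → Ωs → E) (hW2 : ∀ j, MemLp (W j) 2 μ)
    (hWint : ∀ j, Integrable (W j) μ) (hW0 : ∀ j, ∫ ω, W j ω ∂μ = 0)
    (hcross : ∀ j k, j ≠ k → ∫ ω, (inner ℝ (W j ω) (W k ω) : ℝ) ∂μ = 0)
    (c0 : E) (i : Fin N) :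
    ∫ ω, ‖(W i ω - κ • ∑ j, W j ω) + c0‖ ^ 2 ∂μ
      = (∫ ω, ‖W i ω‖ ^ 2 ∂μ) - 2 * κ * (∫ ω, ‖W i ω‖ ^ 2 ∂μ)
        + κ ^ 2 * ∑ j, ∫ ω, ‖W j ω‖ ^ 2 ∂μ + ‖c0‖ ^ 2 := by
  have hS2 : MemLp (fun ω => ∑ j, W j ω) 2 μ := by
    have h := memLp_finset_sum' univ fun (j : Fin N) _ => hW2 j
    refine h.ae_eq (Filter.Eventually.of_forall fun ω => ?_)
    simp
  have hSint : Integrable (fun ω => ∑ j, W j ω) μ := integrable_finset_sum _ fun j _ => hWint j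
  have hS0 : ∫ ω, ∑ j, W j ω ∂μ = 0 := by
    rw [integral_finset_sum _ fun j _ => hWint j]
    simp [hW0]
  -- identity for inner with the sum
  have hI1 : ∫ ω, (inner ℝ (W i ω) (∑ j, W j ω) : ℝ) ∂μ = ∫ ω, ‖W i ω‖ ^ 2 ∂μ := by
    have hexp : ∀ ω, (inner ℝ (W i ω) (∑ j, W j ω) : ℝ)
        = ∑ j, (inner ℝ (W i ω) (W j ω) : ℝ) := fun ω => inner_sum _ _ _
    simp_rw [hexp]
    rw [integral_finset_sum _ fun j _ => innerInt (hW2 i) (hW2 j)]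
    rw [Finset.sum_eq_single i (fun j _ hj => hcross i j (Ne.symm hj))
      (fun h => absurd (mem_univ i) h)]
    simp_rw [real_inner_self_eq_norm_sq]
  have hI2 : ∫ ω, ‖∑ j, W j ω‖ ^ 2 ∂μ = ∑ j, ∫ ω, ‖W j ω‖ ^ 2 ∂μ := by
    have hexp : ∀ ω, ‖∑ j, W j ω‖ ^ 2 = ∑ j, ∑ k, (inner ℝ (W j ω) (W k ω) : ℝ) := fun ω => by
      rw [← real_inner_self_eq_norm_sq, sum_inner]
      exact Finset.sum_congr rfl fun j _ => inner_sum _ _ _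
    simp_rw [hexp]
    rw [integral_finset_sum _ fun j _ =>
      integrable_finset_sum _ fun k _ => innerInt (hW2 j) (hW2 k)]
    refine Finset.sum_congr rfl fun j _ => ?_
    rw [integral_finset_sum _ fun k _ => innerInt (hW2 j) (hW2 k)]
    rw [Finset.sum_eq_single j (fun k _ hk => hcross j k (Ne.symm hk))
      (fun h => absurd (mem_univ j) h)]
    simp_rw [real_inner_self_eq_norm_sq]
  have hI3 : ∀ (F : Ωs → E), Integrable F μ → (∫ ω, F ω ∂μ) = 0 →
      ∫ ω, (inner ℝ (F ω) c0 : ℝ) ∂μ = 0 := by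
    intro F hF h0
    have hflip : ∀ ω, (inner ℝ (F ω) c0 : ℝ) = (inner ℝ c0 (F ω) : ℝ) := fun ω =>
      real_inner_comm _ _
    simp_rw [hflip]
    rw [integral_inner hF c0, h0, inner_zero_right]
  have intA : Integrable (fun ω => ‖W i ω‖ ^ 2) μ := normSqInt (hW2 i)
  have intB : Integrable (fun ω => 2 * κ * (inner ℝ (W i ω) (∑ j, W j ω) : ℝ)) μ :=
    (innerInt (hW2 i) hS2).const_mul _
  have intC : Integrable (fun ω => κ ^ 2 * ‖∑ j, W j ω‖ ^ 2) μ := (normSqInt hS2).const_mul _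
  have intD : Integrable (fun ω => 2 * (inner ℝ (W i ω) c0 : ℝ)) μ :=
    (innerInt (hW2 i) (memLp_const c0)).const_mul _
  have intE : Integrable (fun ω => 2 * κ * (inner ℝ (∑ j, W j ω) c0 : ℝ)) μ := by
    have := (innerInt hS2 (memLp_const c0)).const_mul (2 * κ)
    exact this
  have intAB : Integrable (fun ω => ‖W i ω‖ ^ 2
      - 2 * κ * (inner ℝ (W i ω) (∑ j, W j ω) : ℝ)) μ := by exact intA.sub intB
  have intABC : Integrable (fun ω => ‖W i ω‖ ^ 2
      - 2 * κ * (inner ℝ (W i ω) (∑ j, W j ω) : ℝ) + κ ^ 2 * ‖∑ j, W j ω‖ ^ 2) μ := by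
    exact intAB.add intC
  have intDE : Integrable (fun ω => 2 * (inner ℝ (W i ω) c0 : ℝ)
      - 2 * κ * (inner ℝ (∑ j, W j ω) c0 : ℝ)) μ := by exact intD.sub intE
  have intAll : Integrable (fun ω => ‖W i ω‖ ^ 2
      - 2 * κ * (inner ℝ (W i ω) (∑ j, W j ω) : ℝ) + κ ^ 2 * ‖∑ j, W j ω‖ ^ 2
      + (2 * (inner ℝ (W i ω) c0 : ℝ) - 2 * κ * (inner ℝ (∑ j, W j ω) c0 : ℝ))) μ := by
    exact intABC.add intDE
  have hpt : ∀ ω, ‖(W i ω - κ • ∑ j, W j ω) + c0‖ ^ 2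
      = ‖W i ω‖ ^ 2 - 2 * κ * (inner ℝ (W i ω) (∑ j, W j ω) : ℝ)
        + κ ^ 2 * ‖∑ j, W j ω‖ ^ 2
        + (2 * (inner ℝ (W i ω) c0 : ℝ) - 2 * κ * (inner ℝ (∑ j, W j ω) c0 : ℝ)) + ‖c0‖ ^ 2 :=
    fun ω => normdecomp _ _ _ _
  simp_rw [hpt]
  rw [integral_add intAll (integrable_const _), integral_add intABC intDE,
    integral_add intAB intC, integral_sub intA intB, integral_sub intD intE,
    integral_const_mul, integral_const_mul, integral_const_mul, integral_const_mul,
    hI1, hI2, hI3 (W i) (hWint i) (hW0 i), hI3 _ hSint hS0, integral_const]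
  simp [measure_univ]

end helpers

theorem dev_from_average_noniid {d n f : ℕ} (hfn : f < n)
    {Ωs : Type*} [MeasurableSpace Ωs] (μ : Measure Ωs) [IsProbabilityMeasure μ]
    (V : Fin (n - f) → Ωs → EuclideanSpace ℝ (Fin d))
    (g : Fin (n - f) → EuclideanSpace ℝ (Fin d))
    (hint : ∀ i, Integrable (V i) μ)
    (hL2 : ∀ i, MemLp (V i) 2 μ)
    (hindep : iIndepFun V μ)
    (σ Δ : ℝ) (μ0 : EuclideanSpace ℝ (Fin d))
    (hmean : ∀ i, ∫ ω, V i ω ∂μ = g i)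
    (hvar : ∀ i, ∫ ω, ‖V i ω - g i‖ ^ 2 ∂μ ≤ σ ^ 2)
    (hhet : ((n : ℝ) - f)⁻¹ * ∑ j, ‖g j - μ0‖ ^ 2 ≤ Δ ^ 2) :
    ∀ i, ∫ ω, ‖V i ω - ((n : ℝ) - f)⁻¹ • ∑ j, V j ω‖ ^ 2 ∂μ ≤
      2 * σ ^ 2 + 2 * ((n : ℝ) - f + 1) * Δ ^ 2 := by
  intro i
  have hm0 : 0 < n - f := Nat.sub_pos_of_lt hfn
  have hcast : ((n : ℝ) - f) = ((n - f : ℕ) : ℝ) := by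
    rw [Nat.cast_sub hfn.le]
  set κ : ℝ := ((n : ℝ) - f)⁻¹ with hκdef
  have hmR : (0 : ℝ) < ((n - f : ℕ) : ℝ) := by exact_mod_cast hm0
  have hmR1 : (1 : ℝ) ≤ ((n - f : ℕ) : ℝ) := by exact_mod_cast hm0
  have hκm : κ * ((n - f : ℕ) : ℝ) = 1 := by
    rw [hκdef, hcast]; exact inv_mul_cancel₀ (ne_of_gt hmR)
  have hκpos : 0 < κ := by rw [hκdef, hcast]; positivity
  have hκle : κ ≤ 1 := by nlinarith
  -- centered variables
  have hW2 : ∀ j : Fin (n - f), MemLp (fun ω => V j ω - g j) 2 μ := fun j =>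
    ((hL2 j).sub (memLp_const (g j))).ae_eq (Filter.Eventually.of_forall fun ω => rfl)
  have hWint : ∀ j : Fin (n - f), Integrable (fun ω => V j ω - g j) μ := fun j =>
    (hint j).sub (integrable_const _)
  have hW0 : ∀ j : Fin (n - f), ∫ ω, (V j ω - g j) ∂μ = 0 := fun j => by
    rw [integral_sub (hint j) (integrable_const _), hmean j, integral_const]
    simp
  -- coordinates
  have hWc2 : ∀ (j : Fin (n - f)) (c : Fin d), MemLp (fun ω => V j ω c - g j c) 2 μ := by
    intro j c
    have h := (EuclideanSpace.proj (𝕜 := ℝ) c).comp_memLp' (hW2 j)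
    exact h.ae_eq (Filter.Eventually.of_forall fun ω => rfl)
  have hWc0 : ∀ (j : Fin (n - f)) (c : Fin d), ∫ ω, (V j ω c - g j c) ∂μ = 0 := by
    intro j c
    have h := (EuclideanSpace.proj (𝕜 := ℝ) c).integral_comp_comm (hWint j)
    have h2 : ∫ ω, (V j ω c - g j c) ∂μ
        = EuclideanSpace.proj (𝕜 := ℝ) c (∫ ω, (V j ω - g j) ∂μ) := h
    rw [h2, hW0 j]
    simp
  have hWindep : ∀ j k : Fin (n - f), j ≠ k → ∀ c : Fin d,
      IndepFun (fun ω => V j ω c - g j c) (fun ω => V k ω c - g k c) μ := by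
    intro j k hjk c
    have h1 : IndepFun (V j) (V k) μ := hindep.indepFun hjk
    have hmeas : ∀ l : Fin (n - f),
        Measurable (fun x : EuclideanSpace ℝ (Fin d) => x c - g l c) := fun l =>
      ((EuclideanSpace.proj (𝕜 := ℝ) c).measurable).sub measurable_const
    exact h1.comp (hmeas j) (hmeas k)
  -- cross terms vanish
  have hcross : ∀ j k : Fin (n - f), j ≠ k →
      ∫ ω, (inner ℝ ((fun ω' => V j ω' - g j) ω) ((fun ω' => V k ω' - g k) ω) : ℝ) ∂μ = 0 := by
    intro j k hjk
    have hexp : ∀ ω, (inner ℝ (V j ω - g j) (V k ω - g k) : ℝ)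
        = ∑ c, (V j ω c - g j c) * (V k ω c - g k c) := fun ω => by
      simp [PiLp.inner_apply, RCLike.inner_apply, conj_trivial, mul_comm]
    simp only []
    simp_rw [hexp]
    rw [integral_finset_sum]
    · refine Finset.sum_eq_zero fun c _ => ?_
      have h := (hWindep j k hjk c).integral_fun_mul_eq_mul_integral
        (hWc2 j c).aestronglyMeasurable (hWc2 k c).aestronglyMeasurable
      have h2 : ∫ ω, (V j ω c - g j c) * (V k ω c - g k c) ∂μ
          = (∫ ω, (V j ω c - g j c) ∂μ) * ∫ ω, (V k ω c - g k c) ∂μ := h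
      rw [h2, hWc0, hWc0, mul_zero]
    · intro c _
      exact (hWindep j k hjk c).integrable_mul
        ((hWc2 j c).integrable one_le_two) ((hWc2 k c).integrable one_le_two)
  -- apply the key identity
  set c0 : EuclideanSpace ℝ (Fin d) := g i - κ • ∑ j, g j with hc0def
  have hkey := key_integral κ (fun j ω => V j ω - g j) hW2 hWint hW0 hcross c0 i
  have hptwise : ∀ ω, V i ω - κ • ∑ j, V j ω
      = ((V i ω - g i) - κ • ∑ j, (V j ω - g j)) + c0 := by
    intro ω
    rw [hc0def, Finset.sum_sub_distrib, smul_sub]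
    abel
  have hintegral : ∫ ω, ‖V i ω - κ • ∑ j, V j ω‖ ^ 2 ∂μ
      = (∫ ω, ‖V i ω - g i‖ ^ 2 ∂μ) - 2 * κ * (∫ ω, ‖V i ω - g i‖ ^ 2 ∂μ)
        + κ ^ 2 * ∑ j, ∫ ω, ‖V j ω - g j‖ ^ 2 ∂μ + ‖c0‖ ^ 2 := by
    rw [← hkey]
    exact integral_congr_ae (Filter.Eventually.of_forall fun ω => by simp only [hptwise ω])
  -- scalar bounds
  have hs_nonneg : ∀ j : Fin (n - f), 0 ≤ ∫ ω, ‖V j ω - g j‖ ^ 2 ∂μ := fun j =>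
    integral_nonneg fun ω => sq_nonneg _
  have hσ : 0 ≤ σ ^ 2 := le_trans (hs_nonneg i) (hvar i)
  have hsum_s : ∑ j, ∫ ω, ‖V j ω - g j‖ ^ 2 ∂μ ≤ ((n - f : ℕ) : ℝ) * σ ^ 2 := by
    calc ∑ j, ∫ ω, ‖V j ω - g j‖ ^ 2 ∂μ ≤ ∑ _j : Fin (n - f), σ ^ 2 :=
          Finset.sum_le_sum fun j _ => hvar j
      _ = ((n - f : ℕ) : ℝ) * σ ^ 2 := by simp [mul_comm]
  have h1 : (∫ ω, ‖V i ω - g i‖ ^ 2 ∂μ) - 2 * κ * (∫ ω, ‖V i ω - g i‖ ^ 2 ∂μ)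
      + κ ^ 2 * ∑ j, ∫ ω, ‖V j ω - g j‖ ^ 2 ∂μ ≤ 2 * σ ^ 2 := by
    have t1 : κ ^ 2 * ∑ j, ∫ ω, ‖V j ω - g j‖ ^ 2 ∂μ
        ≤ κ ^ 2 * (((n - f : ℕ) : ℝ) * σ ^ 2) :=
      mul_le_mul_of_nonneg_left hsum_s (sq_nonneg κ)
    have t2 : κ ^ 2 * (((n - f : ℕ) : ℝ) * σ ^ 2) = κ * σ ^ 2 := by
      linear_combination (κ * σ ^ 2) * hκm
    nlinarith [hs_nonneg i, hvar i, mul_nonneg hκpos.le (hs_nonneg i),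
      mul_le_mul_of_nonneg_right hκle hσ]
  have hΔ : (0 : ℝ) ≤ Δ ^ 2 := sq_nonneg Δ
  have hsum_g : ∑ j, ‖g j - μ0‖ ^ 2 ≤ ((n - f : ℕ) : ℝ) * Δ ^ 2 := by
    have h' : ((n - f : ℕ) : ℝ) * (κ * ∑ j, ‖g j - μ0‖ ^ 2)
        ≤ ((n - f : ℕ) : ℝ) * Δ ^ 2 := mul_le_mul_of_nonneg_left hhet hmR.le
    calc ∑ j, ‖g j - μ0‖ ^ 2
        = ((n - f : ℕ) : ℝ) * (κ * ∑ j, ‖g j - μ0‖ ^ 2) := by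
          rw [← mul_assoc, mul_comm (((n - f : ℕ) : ℝ)) κ, hκm, one_mul]
      _ ≤ ((n - f : ℕ) : ℝ) * Δ ^ 2 := h'
  have hg_i : ‖g i - μ0‖ ^ 2 ≤ ((n - f : ℕ) : ℝ) * Δ ^ 2 :=
    le_trans (Finset.single_le_sum (fun j _ => sq_nonneg ‖g j - μ0‖) (mem_univ i)) hsum_g
  have havg : ‖κ • (∑ j, g j) - μ0‖ ^ 2 ≤ Δ ^ 2 := by
    have heq : κ • (∑ j, g j) - μ0 = κ • ∑ j, (g j - μ0) := by
      rw [Finset.sum_sub_distrib, smul_sub]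
      congr 1
      rw [Finset.sum_const, card_univ, Fintype.card_fin, ← Nat.cast_smul_eq_nsmul ℝ,
        smul_smul, hκm, one_smul]
    rw [heq, norm_smul, Real.norm_eq_abs, mul_pow, sq_abs]
    have hCS : ‖∑ j, (g j - μ0)‖ ^ 2 ≤ ((n - f : ℕ) : ℝ) * ∑ j, ‖g j - μ0‖ ^ 2 := by
      calc ‖∑ j, (g j - μ0)‖ ^ 2 ≤ (∑ j, ‖g j - μ0‖) ^ 2 := by
            have h := norm_sum_le univ (fun j => g j - μ0)
            nlinarith [norm_nonneg (∑ j, (g j - μ0)), Finset.sum_nonneg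
              (fun j (_ : j ∈ (univ : Finset (Fin (n - f)))) => norm_nonneg (g j - μ0))]
        _ ≤ ((n - f : ℕ) : ℝ) * ∑ j, ‖g j - μ0‖ ^ 2 := by
            have h := sq_sum_le_card_mul_sum_sq (s := (univ : Finset (Fin (n - f))))
              (f := fun j => ‖g j - μ0‖)
            simpa using h
    have hb : κ ^ 2 * ‖∑ j, (g j - μ0)‖ ^ 2
        ≤ κ ^ 2 * (((n - f : ℕ) : ℝ) * (((n - f : ℕ) : ℝ) * Δ ^ 2)) := by
      have h2 : ((n - f : ℕ) : ℝ) * ∑ j, ‖g j - μ0‖ ^ 2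
          ≤ ((n - f : ℕ) : ℝ) * (((n - f : ℕ) : ℝ) * Δ ^ 2) :=
        mul_le_mul_of_nonneg_left hsum_g hmR.le
      exact mul_le_mul_of_nonneg_left (le_trans hCS h2) (sq_nonneg κ)
    calc κ ^ 2 * ‖∑ j, (g j - μ0)‖ ^ 2
        ≤ κ ^ 2 * (((n - f : ℕ) : ℝ) * (((n - f : ℕ) : ℝ) * Δ ^ 2)) := hb
      _ = Δ ^ 2 := by linear_combination (Δ ^ 2 * (κ * ((n - f : ℕ) : ℝ) + 1)) * hκm
  have h2 : ‖c0‖ ^ 2 ≤ 2 * ((n - f : ℕ) : ℝ) * Δ ^ 2 + 2 * Δ ^ 2 := by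
    have hc0eq : c0 = (g i - μ0) - (κ • (∑ j, g j) - μ0) := by
      rw [hc0def]; abel
    have htri : ‖c0‖ ≤ ‖g i - μ0‖ + ‖κ • (∑ j, g j) - μ0‖ := by
      rw [hc0eq]; exact norm_sub_le _ _
    nlinarith [norm_nonneg c0, norm_nonneg (g i - μ0), norm_nonneg (κ • (∑ j, g j) - μ0),
      sq_nonneg (‖g i - μ0‖ - ‖κ • (∑ j, g j) - μ0‖), hg_i, havg]
  rw [hintegral, hcast]
  nlinarith [h1, h2, hΔ]
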